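/- Let Ω = {0,1}^∞, F the algebra generated by cylinders, Σ ⊇ F a σ-algebra, and I a strictly proper ideal. Let π be a finitely additive probability on (Ω, F). Then the set function π̃ on the algebra A = {(F ∩ L) ∪ S : F ∈ F, S ∈ I ∩ Σ, L^c ∈ I ∩ Σ} defined by π̃((F ∩ L) ∪ S) = π(F) is well-defined and finitely additive, and satisfies π̃(S) = 0 for every S ∈ I ∩ Σ. -/

import Mathlib

open Filter Topology


/-- A path in `{0,1}^∞`. -/
abbrev BinSeq := ℕ → Bool

/-- The cylinder of length `t` with base `ω`: all sequences agreeing with `ω`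
in the first `t` coordinates. -/
def cyl {X : Type*} (ω : ℕ → X) (t : ℕ) : Set (ℕ → X) := {ω' | ∀ i < t, ω' i = ω i}

/-- An algebra of subsets of `Ω`. -/
structure SetAlgebra (Ω : Type*) where
  sets : Set (Set Ω)
  univ_mem : Set.univ ∈ sets
  compl_mem : ∀ S ∈ sets, Sᶜ ∈ sets
  union_mem : ∀ S ∈ sets, ∀ T ∈ sets, S ∪ T ∈ sets

/-- The algebra is a σ-algebra: closed under countable unions. -/
def SetAlgebra.IsSigmaAlgebra {Ω : Type*} (A : SetAlgebra Ω) : Prop :=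
  ∀ f : ℕ → Set Ω, (∀ n, f n ∈ A.sets) → (⋃ n, f n) ∈ A.sets

/-- The power-set algebra. -/
def SetAlgebra.top (Ω : Type*) : SetAlgebra Ω :=
  ⟨Set.univ, trivial, fun _ _ => trivial, fun _ _ _ _ => trivial⟩

/-- A finitely additive probability on `(Ω, A)`.  The function `m` is defined on all
subsets for convenience; only its values on `A.sets` are constrained. -/
structure FA {Ω : Type*} (A : SetAlgebra Ω) where
  m : Set Ω → ℝ
  nonneg : ∀ S ∈ A.sets, 0 ≤ m S
  total : m Set.univ = 1
  add : ∀ S ∈ A.sets, ∀ T ∈ A.sets, Disjoint S T → m (S ∪ T) = m S + m T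

/-- Conditional probability `P(E | C) = P(E ∩ C) / P(C)`. -/
noncomputable def FA.cond {Ω : Type*} {A : SetAlgebra Ω} (P : FA A) (E C : Set Ω) : ℝ :=
  P.m (E ∩ C) / P.m C

/-- `Q` is absolutely continuous w.r.t. `P` (written `Q ≪ P` in the paper):
for every sequence of events, `P(Eₙ) → 0` implies `Q(Eₙ) → 0`. -/
def AbsCont {Ω : Type*} {A : SetAlgebra Ω} (P Q : FA A) : Prop :=
  ∀ E : ℕ → Set Ω, (∀ n, E n ∈ A.sets) →
    Tendsto (fun n => P.m (E n)) atTop (𝓝 0) → Tendsto (fun n => Q.m (E n)) atTop (𝓝 0)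

/-- `P` merges with `Q`: for every `ε > 0`, the `Q`-probability of the set of paths where
some event has conditional probabilities (given the first `t` coordinates) differing by
more than `ε` tends to `0` as `t → ∞`.  (`sup_E |P(E|ωᵗ) - Q(E|ωᵗ)| > ε` is expressed
equivalently as `∃ E`.) -/
def Merges {A : SetAlgebra BinSeq} (P Q : FA A) : Prop :=
  ∀ ε > 0, Tendsto
    (fun t => Q.m {ω | ∃ E ∈ A.sets, ε < |P.cond E (cyl ω t) - Q.cond E (cyl ω t)|})
    atTop (𝓝 0)

/-- Membership in the algebra `F` generated by the cylinders of `{0,1}^∞`: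
the finite unions of cylinders (the empty union giving `∅`). -/
def InCylAlg (S : Set BinSeq) : Prop :=
  ∃ (n : ℕ) (f : Fin n → BinSeq × ℕ), S = ⋃ i, cyl (f i).1 (f i).2

/-- `Q` agrees with `P` on the algebra generated by cylinders, i.e. `Q` is an
extension of `P_F` from `F` to `Σ`. -/
def ExtAgree {A : SetAlgebra BinSeq} (P Q : FA A) : Prop :=
  ∀ S, InCylAlg S → Q.m S = P.m S

/-- `P` is an extreme point of the set `E(P_F, F, Σ)` of extensions of its restriction
to the cylinder algebra: any representation of `P` as a nontrivial convex combination
of two extensions forces the two extensions to coincide (with `P`). -/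
def ExtremePoint {A : SetAlgebra BinSeq} (P : FA A) : Prop :=
  ∀ Q R : FA A, ExtAgree P Q → ExtAgree P R →
    ∀ α : ℝ, 0 < α → α < 1 →
      (∀ S ∈ A.sets, P.m S = α * Q.m S + (1 - α) * R.m S) →
      ∀ S ∈ A.sets, Q.m S = R.m S

/-- `P` is strongly nonatomic (Savagean): every event can be split in any proportion. -/
def StronglyNonatomic {Ω : Type*} {A : SetAlgebra Ω} (P : FA A) : Prop :=
  ∀ E ∈ A.sets, ∀ α : ℝ, 0 ≤ α → α ≤ 1 → ∃ F ∈ A.sets, F ⊆ E ∧ P.m F = α * P.m E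

/-- The Blackwell–Dubins property: `P` merges with every `Q ≪ P`. -/
def BDProp {A : SetAlgebra BinSeq} (P : FA A) : Prop :=
  ∀ Q : FA A, AbsCont P Q → Merges P Q

/-- A strictly proper ideal of subsets of `{0,1}^∞`: a nonempty collection of "small"
sets closed under subsets and finite unions, containing no cylinder. -/
structure StrictIdeal where
  sets : Set (Set BinSeq)
  empty_mem : ∅ ∈ sets
  subset_mem : ∀ S ∈ sets, ∀ R, R ⊆ S → R ∈ sets
  union_mem : ∀ S ∈ sets, ∀ T ∈ sets, S ∪ T ∈ sets
  no_cyl : ∀ (ω : BinSeq) (t : ℕ), cyl ω t ∉ sets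

/-- The collection `A = {(F ∩ L) ∪ S : F ∈ F, S small and in Σ, Lᶜ small and in Σ}`. -/
def calA (A : SetAlgebra BinSeq) (I : StrictIdeal) : Set (Set BinSeq) :=
  {E | ∃ F L S : Set BinSeq, InCylAlg F ∧ S ∈ I.sets ∧ S ∈ A.sets ∧
        Lᶜ ∈ I.sets ∧ Lᶜ ∈ A.sets ∧ E = (F ∩ L) ∪ S}

section Aux

lemma mem_cyl_self (x : BinSeq) (t : ℕ) : x ∈ cyl x t := fun _ _ => rfl

lemma cyl_subset_of_mem {x b : BinSeq} {t : ℕ} (hx : x ∈ cyl b t) : cyl x t ⊆ cyl b t :=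
  fun ω hω i hi => (hω i hi).trans (hx i hi)

/-- Sets that contain a cylinder around each of their points. -/
def LocCyl (X : Set BinSeq) : Prop := ∀ x ∈ X, ∃ t, cyl x t ⊆ X

lemma locCyl_of_inCylAlg {F : Set BinSeq} (h : InCylAlg F) : LocCyl F := by
  obtain ⟨n, f, rfl⟩ := h
  intro x hx
  obtain ⟨i, hi⟩ := Set.mem_iUnion.1 hx
  exact ⟨(f i).2, fun ω hω => Set.mem_iUnion.2 ⟨i, cyl_subset_of_mem hi hω⟩⟩

lemma locCyl_compl_of_inCylAlg {G : Set BinSeq} (h : InCylAlg G) : LocCyl Gᶜ := by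
  obtain ⟨n, f, rfl⟩ := h
  intro x hx
  refine ⟨Finset.univ.sup (fun i => (f i).2), fun ω hω hmem => hx ?_⟩
  obtain ⟨i, hi⟩ := Set.mem_iUnion.1 hmem
  refine Set.mem_iUnion.2 ⟨i, fun j hj => ?_⟩
  have hjt : j < Finset.univ.sup (fun i => (f i).2) :=
    lt_of_lt_of_le hj (Finset.le_sup (f := fun i => (f i).2) (Finset.mem_univ i))
  exact (hω j hjt).symm.trans (hi j hj)

lemma locCyl_inter {X Y : Set BinSeq} (hX : LocCyl X) (hY : LocCyl Y) : LocCyl (X ∩ Y) := by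
  rintro x ⟨hx, hy⟩
  obtain ⟨t₁, h₁⟩ := hX x hx
  obtain ⟨t₂, h₂⟩ := hY x hy
  refine ⟨max t₁ t₂, fun ω hω => ⟨h₁ (fun i hi => hω i (lt_of_lt_of_le hi (le_max_left _ _))),
    h₂ (fun i hi => hω i (lt_of_lt_of_le hi (le_max_right _ _)))⟩⟩

lemma eq_empty_of_locCyl {X T : Set BinSeq} (I : StrictIdeal) (hX : LocCyl X)
    (hT : T ∈ I.sets) (hsub : X ⊆ T) : X = ∅ := by
  by_contra h
  obtain ⟨x, hx⟩ := Set.nonempty_iff_ne_empty.2 h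
  obtain ⟨t, ht⟩ := hX x hx
  exact I.no_cyl x t (I.subset_mem T hT _ (ht.trans hsub))

lemma inCylAlg_empty : InCylAlg (∅ : Set BinSeq) :=
  ⟨0, Fin.elim0, (Set.iUnion_of_empty _).symm⟩

lemma inCylAlg_union {F G : Set BinSeq} (hF : InCylAlg F) (hG : InCylAlg G) :
    InCylAlg (F ∪ G) := by
  obtain ⟨n, f, rfl⟩ := hF
  obtain ⟨m, g, rfl⟩ := hG
  refine ⟨n + m, Sum.elim f g ∘ finSumFinEquiv.symm, ?_⟩
  simp only [Function.comp_apply]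
  rw [finSumFinEquiv.symm.surjective.iUnion_comp
    (fun x => cyl ((Sum.elim f g) x).1 ((Sum.elim f g) x).2), Set.iUnion_sum]
  simp

/-- Key well-definedness fact: if two canonical representations give the same set,
the cylinder-algebra parts coincide. -/
lemma cylAlg_part_eq {F₁ L₁ S₁ F₂ L₂ S₂ : Set BinSeq} (I : StrictIdeal)
    (hF₁ : InCylAlg F₁) (hF₂ : InCylAlg F₂)
    (hS₁ : S₁ ∈ I.sets) (hS₂ : S₂ ∈ I.sets)
    (hL₁ : L₁ᶜ ∈ I.sets) (hL₂ : L₂ᶜ ∈ I.sets)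
    (heq : (F₁ ∩ L₁) ∪ S₁ = (F₂ ∩ L₂) ∪ S₂) : F₁ = F₂ := by
  have key : ∀ F G L S : Set BinSeq, InCylAlg F → InCylAlg G → Lᶜ ∈ I.sets →
      S ∈ I.sets → F ∩ L ⊆ G ∪ S → F ⊆ G := by
    intro F G L S hF hG hL hS hsub
    have hsmall : Lᶜ ∪ S ∈ I.sets := I.union_mem _ hL _ hS
    have hdiff : F ∩ Gᶜ ⊆ Lᶜ ∪ S := by
      rintro x ⟨hxF, hxG⟩
      by_cases hxL : x ∈ L
      · rcases hsub ⟨hxF, hxL⟩ with h | h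
        · exact absurd h hxG
        · exact Or.inr h
      · exact Or.inl hxL
    have hloc : LocCyl (F ∩ Gᶜ) :=
      locCyl_inter (locCyl_of_inCylAlg hF) (locCyl_compl_of_inCylAlg hG)
    have hemp := eq_empty_of_locCyl I hloc hsmall hdiff
    intro x hx
    by_contra hxG
    have : x ∈ (∅ : Set BinSeq) := hemp ▸ Set.mem_inter hx hxG
    exact this
  have h₁₂ : F₁ ∩ L₁ ⊆ F₂ ∪ S₂ := by
    intro x hx
    have : x ∈ (F₂ ∩ L₂) ∪ S₂ := heq ▸ Or.inl hx
    rcases this with h | h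
    · exact Or.inl h.1
    · exact Or.inr h
  have h₂₁ : F₂ ∩ L₂ ⊆ F₁ ∪ S₁ := by
    intro x hx
    have : x ∈ (F₁ ∩ L₁) ∪ S₁ := heq ▸ Or.inl hx
    rcases this with h | h
    · exact Or.inl h.1
    · exact Or.inr h
  exact Set.Subset.antisymm
    (key F₁ F₂ L₁ S₂ hF₁ hF₂ hL₁ hS₂ h₁₂)
    (key F₂ F₁ L₂ S₁ hF₂ hF₁ hL₂ hS₁ h₂₁)

lemma setAlgebra_empty_mem {Ω : Type*} (A : SetAlgebra Ω) : (∅ : Set Ω) ∈ A.sets := by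
  have := A.compl_mem _ A.univ_mem
  simpa using this

lemma setAlgebra_inter_mem {Ω : Type*} (A : SetAlgebra Ω) {S T : Set Ω}
    (hS : S ∈ A.sets) (hT : T ∈ A.sets) : S ∩ T ∈ A.sets := by
  have : S ∩ T = (Sᶜ ∪ Tᶜ)ᶜ := by simp [Set.compl_union]
  rw [this]
  exact A.compl_mem _ (A.union_mem _ (A.compl_mem _ hS) _ (A.compl_mem _ hT))

lemma inCylAlg_mem_sets {A : SetAlgebra BinSeq}
    (hcyl : ∀ (ω : BinSeq) (t : ℕ), cyl ω t ∈ A.sets) {F : Set BinSeq}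
    (hF : InCylAlg F) : F ∈ A.sets := by
  obtain ⟨n, f, rfl⟩ := hF
  induction n with
  | zero => simpa [Set.iUnion_of_empty] using setAlgebra_empty_mem A
  | succ k ih =>
    have : (⋃ i : Fin (k + 1), cyl (f i).1 (f i).2) =
        (⋃ i : Fin k, cyl (f i.castSucc).1 (f i.castSucc).2) ∪
          cyl (f (Fin.last k)).1 (f (Fin.last k)).2 := by
      ext x
      simp only [Set.mem_iUnion, Set.mem_union]
      constructor
      · rintro ⟨i, hi⟩
        rcases Fin.eq_castSucc_or_eq_last i with ⟨j, rfl⟩ | rfl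
        · exact Or.inl ⟨j, hi⟩
        · exact Or.inr hi
      · rintro (⟨j, hj⟩ | h)
        · exact ⟨j.castSucc, hj⟩
        · exact ⟨Fin.last k, h⟩
    rw [this]
    exact A.union_mem _ (ih _) _ (hcyl _ _)

end Aux

/-- given a finitely additive probability `π` on the cylinder algebra,
the set function `π̃((F ∩ L) ∪ S) = π(F)` on `calA` is well defined (i.e. there is a
function satisfying this identity for every representation), finitely additive on
`calA`, and vanishes on small events. -/
theorem tilde_pi_well_defined_and_additive
    (A : SetAlgebra BinSeq) (hσ : A.IsSigmaAlgebra)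
    (hcyl : ∀ (ω : BinSeq) (t : ℕ), cyl ω t ∈ A.sets)
    (I : StrictIdeal)
    (π : Set BinSeq → ℝ)
    (hnn : ∀ F, InCylAlg F → 0 ≤ π F)
    (htot : π Set.univ = 1)
    (hadd : ∀ F G, InCylAlg F → InCylAlg G → Disjoint F G → π (F ∪ G) = π F + π G) :
    ∃ πt : Set BinSeq → ℝ,
      (∀ F L S : Set BinSeq, InCylAlg F → S ∈ I.sets → S ∈ A.sets →
        Lᶜ ∈ I.sets → Lᶜ ∈ A.sets → πt ((F ∩ L) ∪ S) = π F) ∧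
      (∀ E₁ ∈ calA A I, ∀ E₂ ∈ calA A I, Disjoint E₁ E₂ →
        πt (E₁ ∪ E₂) = πt E₁ + πt E₂) ∧
      (∀ S, S ∈ I.sets → S ∈ A.sets → πt S = 0) := by
  classical
  have hπ0 : π ∅ = 0 := by
    have := hadd ∅ ∅ inCylAlg_empty inCylAlg_empty (disjoint_bot_left)
    simp at this
    linarith
  refine ⟨fun E => if h : E ∈ calA A I then π h.choose else 0, ?_, ?_, ?_⟩
  · -- well-definedness
    intro F L S hF hS hSA hL hLA
    have hmem : (F ∩ L) ∪ S ∈ calA A I := ⟨F, L, S, hF, hS, hSA, hL, hLA, rfl⟩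
    simp only [dif_pos hmem]
    obtain ⟨L', S', hF', hS', _, hL', _, heq'⟩ := hmem.choose_spec
    exact congrArg π (cylAlg_part_eq I hF' hF hS' hS hL' hL heq'.symm)
  · -- finite additivity
    rintro E₁ hE₁ E₂ hE₂ hdisj
    obtain ⟨F₁, L₁, S₁, hF₁, hS₁, hS₁A, hL₁, hL₁A, rfl⟩ := hE₁
    obtain ⟨F₂, L₂, S₂, hF₂, hS₂, hS₂A, hL₂, hL₂A, rfl⟩ := hE₂
    -- the canonical representation of the union
    set S' : Set BinSeq := S₁ ∪ S₂ ∪ ((F₁ ∩ L₁ ∩ L₂ᶜ) ∪ (F₂ ∩ L₂ ∩ L₁ᶜ)) with hS'def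
    have hF₁A : F₁ ∈ A.sets := inCylAlg_mem_sets hcyl hF₁
    have hF₂A : F₂ ∈ A.sets := inCylAlg_mem_sets hcyl hF₂
    have hL₁mem : L₁ ∈ A.sets := by simpa using A.compl_mem _ hL₁A
    have hL₂mem : L₂ ∈ A.sets := by simpa using A.compl_mem _ hL₂A
    have hS'I : S' ∈ I.sets := by
      refine I.union_mem _ (I.union_mem _ hS₁ _ hS₂) _ (I.union_mem _ ?_ _ ?_)
      · exact I.subset_mem _ hL₂ _ (fun x hx => hx.2)
      · exact I.subset_mem _ hL₁ _ (fun x hx => hx.2)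
    have hS'A : S' ∈ A.sets := by
      refine A.union_mem _ (A.union_mem _ hS₁A _ hS₂A) _ (A.union_mem _ ?_ _ ?_)
      · exact setAlgebra_inter_mem A (setAlgebra_inter_mem A hF₁A hL₁mem) hL₂A
      · exact setAlgebra_inter_mem A (setAlgebra_inter_mem A hF₂A hL₂mem) hL₁A
    have hLI : (L₁ ∩ L₂)ᶜ ∈ I.sets := by
      rw [Set.compl_inter]; exact I.union_mem _ hL₁ _ hL₂
    have hLA : (L₁ ∩ L₂)ᶜ ∈ A.sets := by
      rw [Set.compl_inter]; exact A.union_mem _ hL₁A _ hL₂A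
    have hFu : InCylAlg (F₁ ∪ F₂) := inCylAlg_union hF₁ hF₂
    have hrepr : ((F₁ ∩ L₁) ∪ S₁) ∪ ((F₂ ∩ L₂) ∪ S₂) =
        ((F₁ ∪ F₂) ∩ (L₁ ∩ L₂)) ∪ S' := by
      ext x
      simp only [hS'def, Set.mem_union, Set.mem_inter_iff, Set.mem_compl_iff]
      constructor
      · rintro ((⟨h1, h2⟩ | h) | (⟨h1, h2⟩ | h))
        · by_cases hx2 : x ∈ L₂
          · exact Or.inl ⟨Or.inl h1, h2, hx2⟩
          · exact Or.inr (Or.inr (Or.inl ⟨⟨h1, h2⟩, hx2⟩))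
        · exact Or.inr (Or.inl (Or.inl h))
        · by_cases hx1 : x ∈ L₁
          · exact Or.inl ⟨Or.inr h1, hx1, h2⟩
          · exact Or.inr (Or.inr (Or.inr ⟨⟨h1, h2⟩, hx1⟩))
        · exact Or.inr (Or.inl (Or.inr h))
      · rintro (⟨(h1 | h1), h2, h3⟩ | ((h | h) | (⟨⟨h1, h2⟩, _⟩ | ⟨⟨h1, h2⟩, _⟩)))
        · exact Or.inl (Or.inl ⟨h1, h2⟩)
        · exact Or.inr (Or.inl ⟨h1, h3⟩)
        · exact Or.inl (Or.inr h)
        · exact Or.inr (Or.inr h)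
        · exact Or.inl (Or.inl ⟨h1, h2⟩)
        · exact Or.inr (Or.inl ⟨h1, h2⟩)
    -- disjointness of F₁ and F₂
    have hFdisj : Disjoint F₁ F₂ := by
      rw [Set.disjoint_iff_inter_eq_empty]
      have hloc : LocCyl (F₁ ∩ F₂) :=
        locCyl_inter (locCyl_of_inCylAlg hF₁)
          (by exact locCyl_of_inCylAlg hF₂ :
            ∀ x ∈ F₂, ∃ t, cyl x t ⊆ F₂)
      have hsub : F₁ ∩ F₂ ⊆ L₁ᶜ ∪ L₂ᶜ := by
        rintro x ⟨h1, h2⟩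
        by_cases hx1 : x ∈ L₁
        · by_cases hx2 : x ∈ L₂
          · exact absurd (Set.disjoint_iff_inter_eq_empty.1 hdisj ▸
              (Set.mem_inter (Or.inl ⟨h1, hx1⟩) (Or.inl ⟨h2, hx2⟩) :
                x ∈ ((F₁ ∩ L₁) ∪ S₁) ∩ ((F₂ ∩ L₂) ∪ S₂))) (Set.notMem_empty x)
          · exact Or.inr hx2
        · exact Or.inl hx1
      exact eq_empty_of_locCyl I hloc (I.union_mem _ hL₁ _ hL₂) hsub
    -- evaluate πt at the three sets via well-definedness
    have hval : ∀ (F L S : Set BinSeq), InCylAlg F → S ∈ I.sets → S ∈ A.sets →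
        Lᶜ ∈ I.sets → Lᶜ ∈ A.sets →
        (if h : (F ∩ L) ∪ S ∈ calA A I then π h.choose else 0) = π F := by
      intro F L S hF hS hSA hL hLA
      have hmem : (F ∩ L) ∪ S ∈ calA A I := ⟨F, L, S, hF, hS, hSA, hL, hLA, rfl⟩
      simp only [dif_pos hmem]
      obtain ⟨L', S'', hF', hS'', _, hL', _, heq'⟩ := hmem.choose_spec
      exact congrArg π (cylAlg_part_eq I hF' hF hS'' hS hL' hL heq'.symm)
    have e1 := hval F₁ L₁ S₁ hF₁ hS₁ hS₁A hL₁ hL₁A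
    have e2 := hval F₂ L₂ S₂ hF₂ hS₂ hS₂A hL₂ hL₂A
    have e3 := hval (F₁ ∪ F₂) (L₁ ∩ L₂) S' hFu hS'I hS'A hLI hLA
    rw [hrepr]
    simp only [e1, e2, e3]
    exact hadd F₁ F₂ hF₁ hF₂ hFdisj
  · -- vanishes on small sets
    intro S hS hSA
    have hrepr : S = ((∅ : Set BinSeq) ∩ Set.univ) ∪ S := by simp
    have hmem : S ∈ calA A I := ⟨∅, Set.univ, S, inCylAlg_empty, hS, hSA,
      by simpa using I.empty_mem, by simpa using setAlgebra_empty_mem A, hrepr⟩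
    simp only [dif_pos hmem]
    obtain ⟨L', S'', hF', hS'', _, hL', _, heq'⟩ := hmem.choose_spec
    have : hmem.choose = (∅ : Set BinSeq) :=
      cylAlg_part_eq I hF' inCylAlg_empty hS'' hS hL'
        (by simpa using I.empty_mem) (heq'.symm.trans hrepr)
    rw [this, hπ0]
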